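/- Let S̃ ∈ ℝ^{d_k×d_v}, k ∈ ℝ^{d_k}, v ∈ ℝ^{d_v}, e = v - S̃ᵀk, η ∈ (0,1], ε ≥ 0 with (1-η)‖k‖² + ε > 0, and set μ = η/((1-η)‖k‖² + ε). Then the unique minimizer over S ∈ ℝ^{d_k×d_v} of J(S) = (1/2)‖S - S̃‖_F² + (μ/2)‖Sᵀk - v‖² is S* = S̃ + (η/(‖k‖² + ε)) k eᵀ. -/

import Mathlib

open Matrix

private lemma sum_sq_add_fin {n : ℕ} (f g : Fin n → ℝ) :
    ∑ j, (f j + g j) ^ 2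
      = ∑ j, f j ^ 2 + 2 * ∑ j, f j * g j + ∑ j, g j ^ 2 := by
  rw [Finset.mul_sum, ← Finset.sum_add_distrib, ← Finset.sum_add_distrib]
  exact Finset.sum_congr rfl fun j _ => by ring

/-- Exact proximal form of the relaxed Kaczmarz (KLA) update: with
`μ = η/((1-η)‖k‖² + ε)`, the unique minimizer of
`J(S) = (1/2)‖S - S̃‖_F² + (μ/2)‖Sᵀk - v‖²` is `S̃ + (η/(‖k‖²+ε)) k eᵀ`. -/
theorem kla_proximal_form {dk dv : ℕ}
    (St : Matrix (Fin dk) (Fin dv) ℝ) (k : Fin dk → ℝ) (v : Fin dv → ℝ)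
    (e : Fin dv → ℝ) (he : e = v - Stᵀ.mulVec k)
    (η ε : ℝ) (hη0 : 0 < η) (hη1 : η ≤ 1) (hε : 0 ≤ ε)
    (hpos : (1 - η) * (∑ i, k i ^ 2) + ε > 0)
    (μ : ℝ) (hμ : μ = η / ((1 - η) * (∑ i, k i ^ 2) + ε))
    (J : Matrix (Fin dk) (Fin dv) ℝ → ℝ)
    (hJ : ∀ S, J S = (1 / 2) * (∑ i, ∑ j, (S - St) i j ^ 2)
        + (μ / 2) * ∑ j, (Sᵀ.mulVec k - v) j ^ 2)
    (Sstar : Matrix (Fin dk) (Fin dv) ℝ)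
    (hS : Sstar = St + (η / ((∑ i, k i ^ 2) + ε)) • vecMulVec k e) :
    ∀ S : Matrix (Fin dk) (Fin dv) ℝ, S ≠ Sstar → J Sstar < J S := by
  intro S hne
  set K : ℝ := ∑ i, k i ^ 2 with hK
  have hKnn : 0 ≤ K := Finset.sum_nonneg fun i _ => sq_nonneg _
  have hKε : 0 < K + ε := by nlinarith
  set c : ℝ := η / (K + ε) with hc
  have hμpos : 0 < μ := hμ ▸ div_pos hη0 hpos
  have hcoef : c + μ * (c * K - 1) = 0 := by
    have h1 : (K + ε)⁻¹ * (K + ε) = 1 := inv_mul_cancel₀ hKε.ne'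
    have h2 : ((1 - η) * K + ε)⁻¹ * ((1 - η) * K + ε) = 1 := inv_mul_cancel₀ hpos.ne'
    rw [hc, hμ, div_eq_mul_inv, div_eq_mul_inv]
    linear_combination (η * ((1 - η) * K + ε)⁻¹) * h1 - (η * (K + ε)⁻¹) * h2
  set D : Matrix (Fin dk) (Fin dv) ℝ := S - Sstar with hD
  have hDne : D ≠ 0 := sub_ne_zero.mpr hne
  set T : Fin dv → ℝ := fun j => ∑ i, D i j * k i with hT
  -- entrywise formulas
  have hSstarEntry : ∀ i j, Sstar i j = St i j + c * k i * e j := by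
    intro i j
    rw [hS]
    simp [vecMulVec_apply, Matrix.add_apply, Matrix.smul_apply, hc]
    ring
  have hSEntry : ∀ i j, (S - St) i j = D i j + c * k i * e j := by
    intro i j
    simp [hD, Matrix.sub_apply, hSstarEntry i j]
    ring
  have hStk : ∀ j, ∑ i, St i j * k i = v j - e j := by
    intro j
    have := congrFun he j
    simp [Matrix.mulVec, dotProduct, Matrix.transpose_apply, Pi.sub_apply] at this
    linarith [this]
  have hresS : ∀ j, (Sᵀ.mulVec k - v) j = T j + (c * K - 1) * e j := by
    intro j
    have h1 : ∀ i, S i j = D i j + St i j + c * k i * e j := by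
      intro i
      have := hSstarEntry i j
      simp [hD, Matrix.sub_apply] at *
      linarith [this]
    simp only [Pi.sub_apply, Matrix.mulVec, dotProduct, Matrix.transpose_apply]
    calc ∑ i, S i j * k i - v j
        = (∑ i, D i j * k i) + (∑ i, St i j * k i) + c * e j * (∑ i, k i ^ 2) - v j := by
          rw [Finset.mul_sum, ← Finset.sum_add_distrib, ← Finset.sum_add_distrib]
          rw [show (∑ i, (D i j * k i + St i j * k i + c * e j * k i ^ 2))
              = ∑ i, S i j * k i from Finset.sum_congr rfl fun i _ => by rw [h1 i]; ring]
      _ = T j + (c * K - 1) * e j := by rw [hStk j, hT, ← hK]; ring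
  have hresStar : ∀ j, (Sstarᵀ.mulVec k - v) j = (c * K - 1) * e j := by
    intro j
    simp only [Pi.sub_apply, Matrix.mulVec, dotProduct, Matrix.transpose_apply]
    calc ∑ i, Sstar i j * k i - v j
        = (∑ i, St i j * k i) + c * e j * (∑ i, k i ^ 2) - v j := by
          rw [Finset.mul_sum, ← Finset.sum_add_distrib]
          rw [show (∑ i, (St i j * k i + c * e j * k i ^ 2))
              = ∑ i, Sstar i j * k i from Finset.sum_congr rfl fun i _ => by
                rw [hSstarEntry i j]; ring]
      _ = (c * K - 1) * e j := by rw [hStk j, ← hK]; ring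
  -- swap identity
  have hswap : ∑ i, ∑ j, D i j * (c * k i * e j) = c * ∑ j, T j * e j := by
    rw [Finset.sum_comm, Finset.mul_sum]
    refine Finset.sum_congr rfl fun j _ => ?_
    rw [hT]
    simp only [Finset.sum_mul]
    rw [Finset.mul_sum]
    exact Finset.sum_congr rfl fun i _ => by ring
  -- main expansion
  have hJS : J S = J Sstar + (1 / 2) * (∑ i, ∑ j, D i j ^ 2) + (μ / 2) * (∑ j, T j ^ 2)
      + (c + μ * (c * K - 1)) * ∑ j, T j * e j := by
    rw [hJ S, hJ Sstar]
    have h2 : ∑ i, ∑ j, (S - St) i j ^ 2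
        = ∑ i, (∑ j, D i j ^ 2 + 2 * ∑ j, D i j * (c * k i * e j)
            + ∑ j, (c * k i * e j) ^ 2) := by
      refine Finset.sum_congr rfl fun i _ => ?_
      rw [show (∑ j, (S - St) i j ^ 2) = ∑ j, (D i j + c * k i * e j) ^ 2 from
        Finset.sum_congr rfl fun j _ => by rw [hSEntry i j]]
      exact sum_sq_add_fin _ _
    have h3 : ∑ j, (Sᵀ.mulVec k - v) j ^ 2
        = ∑ j, T j ^ 2 + 2 * ∑ j, T j * ((c * K - 1) * e j)
            + ∑ j, ((c * K - 1) * e j) ^ 2 := by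
      rw [show (∑ j, (Sᵀ.mulVec k - v) j ^ 2)
          = ∑ j, (T j + (c * K - 1) * e j) ^ 2 from
        Finset.sum_congr rfl fun j _ => by rw [hresS j]]
      exact sum_sq_add_fin _ _
    have h4 : ∑ j, (Sstarᵀ.mulVec k - v) j ^ 2 = ∑ j, ((c * K - 1) * e j) ^ 2 :=
      Finset.sum_congr rfl fun j _ => by rw [hresStar j]
    have h5 : ∑ i, ∑ j, (Sstar - St) i j ^ 2 = ∑ i, ∑ j, (c * k i * e j) ^ 2 := by
      refine Finset.sum_congr rfl fun i _ => Finset.sum_congr rfl fun j _ => ?_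
      rw [Matrix.sub_apply, hSstarEntry i j]; ring
    rw [h2, h3, h4, h5]
    rw [Finset.sum_add_distrib, Finset.sum_add_distrib]
    have h6 : ∑ j, T j * ((c * K - 1) * e j) = (c * K - 1) * ∑ j, T j * e j := by
      rw [Finset.mul_sum Finset.univ (fun j => T j * e j) (c * K - 1)]
      exact Finset.sum_congr rfl fun j _ => by ring
    have h7 : ∑ i, 2 * ∑ j, D i j * (c * k i * e j)
        = 2 * (c * ∑ j, T j * e j) := by
      rw [← Finset.mul_sum, hswap]
    rw [h6, h7]
    ring
  rw [hJS, hcoef]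
  have hDpos : 0 < ∑ i, ∑ j, D i j ^ 2 := by
    have : ∃ i j, D i j ≠ 0 := by
      by_contra h
      push_neg at h
      exact hDne (by ext i j; simpa using h i j)
    obtain ⟨i0, j0, hij⟩ := this
    have h1 : 0 < ∑ j, D i0 j ^ 2 :=
      Finset.sum_pos' (fun j _ => sq_nonneg _)
        ⟨j0, Finset.mem_univ _, by positivity⟩
    exact Finset.sum_pos' (fun i _ => Finset.sum_nonneg fun j _ => sq_nonneg _)
      ⟨i0, Finset.mem_univ _, h1⟩
  have hTnn : 0 ≤ ∑ j, T j ^ 2 := Finset.sum_nonneg fun j _ => sq_nonneg _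
  nlinarith [hμpos, hDpos, hTnn]
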